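/- For integers n > 2k + t + 2, q ≥ 3, k > t + 1, t > 0 and all integers x > 2: (θ_{k-t})^x · [n-t-x choose k-t-x]_q · q^x · [t+x choose x]_q < (θ_{k-t})^2 · [n-t-2 choose k-t-2]_q · q^2 · [t+2 choose 2]_q. -/

import Mathlib

/-- Gaussian binomial coefficient `[n choose k]_q` as a real number,
with the convention that it is `0` for `k < 0` (and for `k > n`). -/
noncomputable def gbin (q n : ℕ) (k : ℤ) : ℝ :=
  if 0 ≤ k then ∏ i ∈ Finset.range k.toNat, ((q:ℝ)^(n-i) - 1)/((q:ℝ)^(i+1) - 1) else 0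

/-- `θ_m = (q^{m+1}-1)/(q-1)`, the number of points of `PG(m,q)`. -/
noncomputable def theta (q m : ℕ) : ℝ := ((q:ℝ)^(m+1) - 1)/((q:ℝ) - 1)

lemma gbin_eq_div (q N K : ℕ) :
    gbin q N (K:ℤ) = (∏ i ∈ Finset.range K, ((q:ℝ)^(N-i) - 1)) /
      (∏ i ∈ Finset.range K, ((q:ℝ)^(i+1) - 1)) := by
  unfold gbin
  rw [if_pos (by positivity), Int.toNat_natCast]
  rw [Finset.prod_div_distrib]

lemma gbin_neg (q N : ℕ) (K : ℤ) (h : K < 0) : gbin q N K = 0 := by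
  unfold gbin; rw [if_neg (not_le.2 h)]

lemma gbin_succ (q N m : ℕ) :
    gbin q N ((m+1 : ℕ) : ℤ) = (((q:ℝ)^N - 1)/((q:ℝ)^(m+1) - 1)) * gbin q (N-1) (m:ℤ) := by
  rw [gbin_eq_div, gbin_eq_div, Finset.prod_range_succ' (fun i => ((q:ℝ)^(N-i) - 1)),
    Finset.prod_range_succ]
  simp only [Nat.sub_sub, Nat.add_comm 1, Nat.sub_zero]
  rw [mul_div_mul_comm, mul_comm]

lemma gbin_pos (q N K : ℕ) (hq : 2 ≤ q) (hK : K ≤ N) : 0 < gbin q N (K:ℤ) := by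
  rw [gbin_eq_div]
  have hq1 : (1:ℝ) < (q:ℝ) := by exact_mod_cast hq
  apply div_pos <;> apply Finset.prod_pos <;> intro i hi
  · have hiK : i < K := Finset.mem_range.1 hi
    have : (1:ℝ) < (q:ℝ)^(N-i) := one_lt_pow₀ hq1 (by omega)
    linarith
  · have : (1:ℝ) < (q:ℝ)^(i+1) := one_lt_pow₀ hq1 (by omega)
    linarith

lemma theta_pos (q m : ℕ) (hq : 2 ≤ q) : 0 < theta q m := by
  unfold theta
  have hq1 : (1:ℝ) < (q:ℝ) := by exact_mod_cast hq
  apply div_pos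
  · have : (1:ℝ) < (q:ℝ)^(m+1) := one_lt_pow₀ hq1 (by omega)
    linarith
  · linarith

lemma key_ineq (Q : ℝ) (hQ : 3 ≤ Q) (a b c d e : ℕ)
    (ha : 1 ≤ a) (hb : 1 ≤ b) (hc : 1 ≤ c) (hd : 1 ≤ d) (he : 1 ≤ e)
    (hsum : a + b + c + 3 ≤ d + e) :
    Q * (Q^a - 1) * (Q^b - 1) * (Q^c - 1) < (Q - 1) * (Q^d - 1) * (Q^e - 1) := by
  have hQ1 : (1:ℝ) < Q := by linarith
  have hQ0 : (0:ℝ) < Q := by linarith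
  have hpow : ∀ m : ℕ, 1 ≤ m → (3:ℝ) ≤ Q ^ m := by
    intro m hm
    calc (3:ℝ) ≤ Q := hQ
    _ = Q^1 := (pow_one Q).symm
    _ ≤ Q^m := pow_le_pow_right₀ hQ1.le hm
  have pa := hpow a ha
  have pb := hpow b hb
  have pc := hpow c hc
  have pd := hpow d hd
  have pe := hpow e he
  have l1 : Q * (Q^a - 1) * (Q^b - 1) * (Q^c - 1) < Q * Q^a * Q^b * Q^c := by
    have h1 : (Q^a-1)*(Q^b-1) < Q^a*Q^b :=
      mul_lt_mul'' (by linarith) (by linarith) (by linarith) (by linarith)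
    have h2 : ((Q^a-1)*(Q^b-1))*(Q^c-1) < (Q^a*Q^b)*Q^c :=
      mul_lt_mul'' h1 (by linarith) (mul_nonneg (by linarith) (by linarith)) (by linarith)
    calc Q * (Q^a - 1) * (Q^b - 1) * (Q^c - 1)
        = Q * (((Q^a-1)*(Q^b-1))*(Q^c-1)) := by ring
      _ < Q * ((Q^a*Q^b)*Q^c) := mul_lt_mul_of_pos_left h2 hQ0
      _ = Q * Q^a * Q^b * Q^c := by ring
  have e1 : Q * Q^a * Q^b * Q^c = Q^(1+a+b+c) := by
    rw [pow_add, pow_add, pow_add, pow_one]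
  have l2 : Q^(1+a+b+c+3) ≤ Q^(1+d+e) := pow_le_pow_right₀ hQ1.le (by omega)
  have l3 : Q^(1+d+e)/8 ≤ (Q-1)*(Q^d-1)*(Q^e-1) := by
    have h8a : Q/2*(Q^d/2) ≤ (Q-1)*(Q^d-1) :=
      mul_le_mul (by linarith) (by linarith) (by positivity) (by linarith)
    have h8 : (Q/2*(Q^d/2))*(Q^e/2) ≤ ((Q-1)*(Q^d-1))*(Q^e-1) :=
      mul_le_mul h8a (by linarith) (by positivity)
        (mul_nonneg (by linarith) (by linarith))
    have heq : (Q/2*(Q^d/2))*(Q^e/2) = Q^(1+d+e)/8 := by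
      rw [pow_add, pow_add, pow_one]; ring
    calc Q^(1+d+e)/8 = (Q/2*(Q^d/2))*(Q^e/2) := heq.symm
      _ ≤ ((Q-1)*(Q^d-1))*(Q^e-1) := h8
      _ = (Q-1)*(Q^d-1)*(Q^e-1) := by ring
  have hQ3 : (27:ℝ) ≤ Q^3 := by
    have := pow_le_pow_left₀ (by norm_num : (0:ℝ) ≤ 3) hQ 3
    norm_num at this; linarith
  have hP : (0:ℝ) < Q^(1+a+b+c) := pow_pos hQ0 _
  have h27 : 27 * Q^(1+a+b+c) ≤ Q^3 * Q^(1+a+b+c) :=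
    mul_le_mul_of_nonneg_right hQ3 hP.le
  have e2 : Q^3 * Q^(1+a+b+c) = Q^(1+a+b+c+3) := by rw [pow_add]; ring
  linarith [l1, l2, l3, h27]

/-- The quantity appearing in the statement, as a function of `x`. -/
noncomputable def F (q n k t x : ℕ) : ℝ :=
  (theta q (k-t))^x * gbin q (n-t-x) ((k:ℤ)-t-x) * (q:ℝ)^x * gbin q (t+x) (x:ℤ)

lemma F_zero (q n k t z : ℕ) (h : k < t + z) : F q n k t z = 0 := by
  unfold F
  rw [gbin_neg q (n-t-z) _ (by omega)]
  ring

lemma F_pos (q n k t z : ℕ) (hq : 2 ≤ q) (hz : t + z ≤ k) (hkn : k ≤ n) :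
    0 < F q n k t z := by
  unfold F
  have h1 : (k:ℤ) - t - z = ((k-t-z : ℕ):ℤ) := by omega
  rw [h1]
  have hq0 : (0:ℝ) < (q:ℝ) := by positivity
  exact mul_pos (mul_pos (mul_pos (pow_pos (theta_pos q (k-t) hq) z)
    (gbin_pos q (n-t-z) (k-t-z) hq (by omega))) (pow_pos hq0 z))
    (gbin_pos q (t+z) z hq (by omega))

lemma F_step (q n k t y : ℕ) (hq : 3 ≤ q) (hn : 2*k + t + 2 < n) (hk : t + 1 < k)
    (ht : 0 < t) (hy : 2 ≤ y) (hya : t + y + 1 ≤ k) :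
    F q n k t (y+1) < F q n k t y := by
  have hQ : (3:ℝ) ≤ (q:ℝ) := by exact_mod_cast hq
  have hQ1 : (1:ℝ) < (q:ℝ) := by linarith
  have hQ0 : (0:ℝ) < (q:ℝ) := by linarith
  obtain ⟨m, hm⟩ : ∃ m, k - t - y = m + 1 := ⟨k - t - y - 1, by omega⟩
  -- rewrite the gbin in `F y`
  have hGrw : gbin q (n-t-y) ((k:ℤ)-t-y)
      = (((q:ℝ)^(n-t-y) - 1)/((q:ℝ)^(m+1) - 1)) * gbin q (n-t-(y+1)) (m:ℤ) := by
    have h1 : (k:ℤ) - t - y = ((m+1:ℕ):ℤ) := by omega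
    rw [h1, gbin_succ, show n-t-y-1 = n-t-(y+1) from by omega]
  have hHrw : gbin q (t+(y+1)) (((y+1:ℕ)):ℤ)
      = (((q:ℝ)^(t+y+1) - 1)/((q:ℝ)^(y+1) - 1)) * gbin q (t+y) (y:ℤ) := by
    rw [show t+(y+1) = (t+y)+1 from by omega, gbin_succ,
      show t+y+1-1 = t+y from by omega]
  have hcast : (k:ℤ) - t - ((y+1:ℕ):ℤ) = ((m:ℕ):ℤ) := by push_cast; omega
  have Gpos : 0 < gbin q (n-t-(y+1)) (m:ℤ) :=
    gbin_pos q (n-t-(y+1)) m (by omega) (by omega)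
  have Hpos : 0 < gbin q (t+y) (y:ℤ) :=
    gbin_pos q (t+y) y (by omega) (by omega)
  have θpos : 0 < theta q (k-t) := theta_pos q (k-t) (by omega)
  have hd1 : (0:ℝ) < (q:ℝ)^(y+1) - 1 := by
    have : (1:ℝ) < (q:ℝ)^(y+1) := one_lt_pow₀ hQ1 (by omega)
    linarith
  have hd2 : (0:ℝ) < (q:ℝ)^(m+1) - 1 := by
    have : (1:ℝ) < (q:ℝ)^(m+1) := one_lt_pow₀ hQ1 (by omega)
    linarith
  have hr : theta q (k-t) * (q:ℝ) * (((q:ℝ)^(t+y+1) - 1)/((q:ℝ)^(y+1) - 1))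
      < ((q:ℝ)^(n-t-y) - 1)/((q:ℝ)^(m+1) - 1) := by
    have heq : theta q (k-t) * (q:ℝ) * (((q:ℝ)^(t+y+1) - 1)/((q:ℝ)^(y+1) - 1))
        = ((q:ℝ) * ((q:ℝ)^(k-t+1) - 1) * ((q:ℝ)^(t+y+1) - 1))
          / (((q:ℝ) - 1) * ((q:ℝ)^(y+1) - 1)) := by
      unfold theta
      rw [div_mul_eq_mul_div, div_mul_div_comm]
      ring
    rw [heq, div_lt_div_iff₀ (by nlinarith) hd2]
    calc (q:ℝ) * ((q:ℝ)^(k-t+1) - 1) * ((q:ℝ)^(t+y+1) - 1) * ((q:ℝ)^(m+1) - 1)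
        = (q:ℝ) * ((q:ℝ)^(k-t+1) - 1) * ((q:ℝ)^(m+1) - 1) * ((q:ℝ)^(t+y+1) - 1) := by
          ring
      _ < ((q:ℝ) - 1) * ((q:ℝ)^(n-t-y) - 1) * ((q:ℝ)^(y+1) - 1) :=
          key_ineq (q:ℝ) hQ (k-t+1) (m+1) (t+y+1) (n-t-y) (y+1)
            (by omega) (by omega) (by omega) (by omega) (by omega) (by omega)
      _ = ((q:ℝ)^(n-t-y) - 1) * (((q:ℝ) - 1) * ((q:ℝ)^(y+1) - 1)) := by ring
  have Cpos : 0 < (theta q (k-t))^y * (q:ℝ)^y * gbin q (n-t-(y+1)) (m:ℤ)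
      * gbin q (t+y) (y:ℤ) :=
    mul_pos (mul_pos (mul_pos (pow_pos θpos y) (pow_pos hQ0 y)) Gpos) Hpos
  calc F q n k t (y+1)
      = ((theta q (k-t))^y * (q:ℝ)^y * gbin q (n-t-(y+1)) (m:ℤ) * gbin q (t+y) (y:ℤ))
        * (theta q (k-t) * (q:ℝ) * (((q:ℝ)^(t+y+1) - 1)/((q:ℝ)^(y+1) - 1))) := by
        unfold F
        rw [hcast, hHrw]
        ring
    _ < ((theta q (k-t))^y * (q:ℝ)^y * gbin q (n-t-(y+1)) (m:ℤ) * gbin q (t+y) (y:ℤ))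
        * (((q:ℝ)^(n-t-y) - 1)/((q:ℝ)^(m+1) - 1)) := mul_lt_mul_of_pos_left hr Cpos
    _ = F q n k t y := by
        unfold F
        rw [hGrw]
        ring

theorem stmt_12 (q n k t x : ℕ) (hn : 2*k + t + 2 < n) (hq : 3 ≤ q) (hk : t + 1 < k)
    (ht : 0 < t) (hx : 2 < x) :
    (theta q (k-t))^x * gbin q (n-t-x) ((k:ℤ)-t-x) * (q:ℝ)^x * gbin q (t+x) (x:ℤ)
    < (theta q (k-t))^2 * gbin q (n-t-2) ((k:ℤ)-t-2) * (q:ℝ)^2 * gbin q (t+2) (2:ℤ) := by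
  have hF2 : 0 < F q n k t 2 := F_pos q n k t 2 (by omega) (by omega) (by omega)
  have main : ∀ y : ℕ, 3 ≤ y → F q n k t y < F q n k t 2 := by
    intro y hy
    induction y, hy using Nat.le_induction with
    | base =>
      by_cases hcase : t + 3 ≤ k
      · exact F_step q n k t 2 hq hn hk ht (le_refl 2) hcase
      · rw [F_zero q n k t 3 (by omega)]; exact hF2
    | succ z hz3 ih =>
      by_cases hcase : t + z + 1 ≤ k
      · exact lt_trans (F_step q n k t z hq hn hk ht (by omega) hcase) ih
      · rw [F_zero q n k t (z+1) (by omega)]; exact hF2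
  have hgoal : F q n k t x < F q n k t 2 := main x hx
  have h2 : F q n k t 2 = (theta q (k-t))^2 * gbin q (n-t-2) ((k:ℤ)-t-2) * (q:ℝ)^2
      * gbin q (t+2) (2:ℤ) := by
    unfold F; norm_num
  have hx' : F q n k t x = (theta q (k-t))^x * gbin q (n-t-x) ((k:ℤ)-t-x) * (q:ℝ)^x
      * gbin q (t+x) (x:ℤ) := rfl
  rw [← h2, ← hx']
  exact hgoal
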